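/- Let R → S be a finite ring homomorphism of commutative noetherian rings, φ : Spec S → Spec R the induced map, and M a finitely generated R-module. Then the set of associated primes of the S-module Hom_R(S, M) equals φ^{-1}(Ass_R M), the set of primes of S lying over associated primes of M. -/

import Mathlib

variable (R S M : Type)

/-- The `S`-module structure on `Hom_R(S, M)` given by `(s • f)(x) = f (s * x)`. -/
noncomputable def homSourceModule [CommRing R] [CommRing S] [Algebra R S]
    [AddCommGroup M] [Module R M] : Module S (S →ₗ[R] M) where
  smul s f := f ∘ₗ Algebra.lmul R S s
  one_smul f := LinearMap.ext fun x => by show f (1 * x) = f x; rw [one_mul]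
  mul_smul s t f := LinearMap.ext fun x => by
    show f (s * t * x) = f (t * (s * x)); ring_nf
  smul_zero s := LinearMap.ext fun x => rfl
  smul_add s f g := LinearMap.ext fun x => rfl
  add_smul s t f := LinearMap.ext fun x => by
    show f ((s + t) * x) = f (s * x) + f (t * x); rw [add_mul, map_add]
  zero_smul f := LinearMap.ext fun x => by show f (0 * x) = 0; rw [zero_mul, map_zero]

attribute [local instance] homSourceModule

open Polynomial in
/-- In a domain `C` integral over `R`, every nonzero element divides a nonzero element
of the image of `R`. -/
private lemma lemB_aux {R C : Type} [CommRing R] [CommRing C] [IsDomain C] [Algebra R C] :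
    ∀ (n : ℕ) (P : R[X]), P.Monic → P.natDegree ≤ n → ∀ c : C, c ≠ 0 →
      Polynomial.aeval c P = 0 →
      ∃ r : R, algebraMap R C r ≠ 0 ∧ ∃ d : C, c * d = algebraMap R C r := by
  intro n
  induction n with
  | zero =>
    intro P hP hd c hc h0
    rw [hP.natDegree_eq_zero.mp (Nat.le_zero.mp hd)] at h0
    simp at h0
  | succ n ih =>
    intro P hP hd c hc h0
    by_cases h1 : P.natDegree = 0
    · rw [hP.natDegree_eq_zero.mp h1] at h0
      simp at h0
    · have key : c * Polynomial.aeval c P.divX + algebraMap R C (P.coeff 0) = 0 := by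
        have h2 := congrArg (Polynomial.aeval c) (Polynomial.X_mul_divX_add P)
        rw [map_add, map_mul, Polynomial.aeval_X, Polynomial.aeval_C, h0] at h2
        exact h2
      by_cases h2 : algebraMap R C (P.coeff 0) = 0
      · have h3 : c * Polynomial.aeval c P.divX = 0 := by rwa [h2, add_zero] at key
        have hdvx : Polynomial.aeval c P.divX = 0 := by
          rcases mul_eq_zero.mp h3 with h | h
          · exact absurd h hc
          · exact h
        have hmon : P.divX.Monic := by
          unfold Polynomial.Monic Polynomial.leadingCoeff
          rw [Polynomial.natDegree_divX_eq_natDegree_tsub_one, Polynomial.coeff_divX,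
            show P.natDegree - 1 + 1 = P.natDegree by omega]
          exact hP
        have hdeg : P.divX.natDegree ≤ n := by
          rw [Polynomial.natDegree_divX_eq_natDegree_tsub_one]
          omega
        exact ih P.divX hmon hdeg c hc hdvx
      · refine ⟨-(P.coeff 0), by simpa using h2, Polynomial.aeval c P.divX, ?_⟩
        rw [map_neg]
        linear_combination key

/-- A nonzero finitely generated torsion-free module over a domain admits a nonzero
linear functional. -/
private lemma lemA_aux (A : Type) [CommRing A] [IsDomain A] :
    ∀ (n : ℕ) (C : Type) [AddCommGroup C] [Module A C],
      (∀ (a : A) (c : C), a • c = 0 → a = 0 ∨ c = 0) →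
      ∀ (v : Fin n → C), Submodule.span A (Set.range v) = ⊤ → Nontrivial C →
      ∃ g : C →ₗ[A] A, g ≠ 0 := by
  intro n
  induction n with
  | zero =>
    intro C _ _ htf v hsp hnt
    exfalso
    have h0 : ∀ c : C, c = 0 := by
      intro c
      have : c ∈ Submodule.span A (Set.range v) := hsp ▸ Submodule.mem_top
      rw [Set.range_eq_empty, Submodule.span_empty, Submodule.mem_bot] at this
      exact this
    obtain ⟨a, b, hab⟩ := hnt
    exact hab ((h0 a).trans (h0 b).symm)
  | succ n ih =>
    intro C _ _ htf v hsp hnt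
    set c₀ := v 0 with hc₀def
    set v' : Fin n → C := fun i => v i.succ with hv'def
    set C' := Submodule.span A (Set.range v') with hC'def
    by_cases hc₀ : c₀ ∈ C'
    · -- the first generator is redundant
      have hsp' : Submodule.span A (Set.range v') = ⊤ := by
        rw [eq_top_iff, ← hsp, Submodule.span_le]
        rintro _ ⟨i, rfl⟩
        refine Fin.cases ?_ ?_ i
        · exact hc₀
        · intro j
          exact Submodule.subset_span ⟨j, rfl⟩
      exact ih C htf v' hsp' hnt
    · have hc₀ne : c₀ ≠ 0 := fun h => hc₀ (h ▸ C'.zero_mem)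
      by_cases ha : ∃ a : A, a ≠ 0 ∧ a • c₀ ∈ C'
      · -- torsion case: a • C ⊆ C'
        obtain ⟨a, ha0, haC⟩ := ha
        have hmem : ∀ c : C, a • c ∈ C' := by
          intro c
          have hc : c ∈ Submodule.span A (Set.range v) := hsp ▸ Submodule.mem_top
          refine Submodule.span_induction ?_ ?_ ?_ ?_ hc
          · rintro _ ⟨i, rfl⟩
            refine Fin.cases ?_ ?_ i
            · exact haC
            · intro j
              exact C'.smul_mem a (Submodule.subset_span ⟨j, rfl⟩)
          · rw [smul_zero]; exact C'.zero_mem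
          · intro x y _ _ hx hy
            rw [smul_add]; exact C'.add_mem hx hy
          · intro b x _ hx
            rw [smul_comm]; exact C'.smul_mem b hx
        have htf' : ∀ (b : A) (c : C'), b • c = 0 → b = 0 ∨ c = 0 := by
          intro b c h
          have : b • (c : C) = 0 := by
            rw [← Submodule.coe_smul, h, Submodule.coe_zero]
          rcases htf b c this with h' | h'
          · exact Or.inl h'
          · exact Or.inr (Subtype.ext h')
        have hnt' : Nontrivial C' := by
          refine ⟨⟨a • c₀, haC⟩, 0, ?_⟩
          intro h
          have : a • c₀ = 0 := congrArg Subtype.val h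
          rcases htf a c₀ this with h' | h'
          · exact ha0 h'
          · exact hc₀ne h'
        set w : Fin n → C' := fun i => ⟨v' i, Submodule.subset_span ⟨i, rfl⟩⟩ with hwdef
        have hspw : Submodule.span A (Set.range w) = ⊤ := by
          apply Submodule.map_injective_of_injective C'.injective_subtype
          rw [Submodule.map_span, Submodule.map_subtype_top]
          have : C'.subtype '' Set.range w = Set.range v' := by
            rw [← Set.range_comp]
            rfl
          rw [this]
        obtain ⟨g', hg'⟩ := ih C' htf' w hspw hnt'
        obtain ⟨x, hx⟩ := DFunLike.ne_iff.mp hg'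
        refine ⟨g' ∘ₗ LinearMap.codRestrict C' (a • LinearMap.id) hmem, ?_⟩
        rw [DFunLike.ne_iff]
        refine ⟨(x : C), ?_⟩
        have hmx : LinearMap.codRestrict C' (a • LinearMap.id) hmem (x : C) = a • x := by
          apply Subtype.ext
          rfl
        simp only [LinearMap.comp_apply, LinearMap.zero_apply, hmx, map_smul]
        rw [smul_eq_mul]
        exact mul_ne_zero ha0 hx
      · -- free case: c₀ is independent of C'
        push_neg at ha
        have hker : ∀ b : A, b • c₀ ∈ C' → b = 0 := by
          intro b hb
          by_contra hb0
          exact ha b hb0 hb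
        set D := C ⧸ C' with hDdef
        set φ := LinearMap.toSpanSingleton A D (C'.mkQ c₀) with hφdef
        have hinj : Function.Injective φ := by
          rw [← LinearMap.ker_eq_bot, Submodule.eq_bot_iff]
          intro b hb
          rw [LinearMap.mem_ker, LinearMap.toSpanSingleton_apply, ← map_smul,
            Submodule.mkQ_apply, Submodule.Quotient.mk_eq_zero] at hb
          exact hker b hb
        have hsurj : Function.Surjective φ := by
          rw [← LinearMap.range_eq_top, ← LinearMap.span_singleton_eq_range, eq_top_iff]
          intro d _
          obtain ⟨y, rfl⟩ := C'.mkQ_surjective d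
          have hy : y ∈ Submodule.span A (Set.range v) := hsp ▸ Submodule.mem_top
          have : C'.mkQ y ∈ Submodule.map C'.mkQ (Submodule.span A (Set.range v)) :=
            Submodule.mem_map_of_mem hy
          rw [Submodule.map_span] at this
          refine Submodule.span_le.mpr ?_ this
          rintro _ ⟨_, ⟨i, rfl⟩, rfl⟩
          refine Fin.cases ?_ ?_ i
          · exact Submodule.mem_span_singleton_self _
          · intro j
            have : v' j ∈ C' := Submodule.subset_span ⟨j, rfl⟩
            rw [Submodule.mkQ_apply]
            show Submodule.Quotient.mk (v j.succ) ∈ _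
            rw [show Submodule.Quotient.mk (v j.succ) = (0 : D) from
              (Submodule.Quotient.mk_eq_zero _).mpr this]
            exact Submodule.zero_mem _
        set e := LinearEquiv.ofBijective φ ⟨hinj, hsurj⟩ with hedef
        refine ⟨e.symm.toLinearMap ∘ₗ C'.mkQ, ?_⟩
        rw [DFunLike.ne_iff]
        refine ⟨c₀, ?_⟩
        have h1 : φ 1 = C'.mkQ c₀ := by
          rw [hφdef, LinearMap.toSpanSingleton_apply, one_smul]
        have : e.symm (C'.mkQ c₀) = 1 := by
          rw [← h1]
          exact e.symm_apply_apply 1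
        simp only [LinearMap.comp_apply, LinearEquiv.coe_coe, LinearMap.zero_apply]
        rw [this]
        exact one_ne_zero

/-- Let `R → S` be a finite homomorphism of commutative noetherian rings,
`φ : Spec S → Spec R` the induced map, and `M` a finitely generated `R`-module.
Then `Ass_S Hom_R(S, M) = φ⁻¹(Ass_R M)`, the set of primes of `S` lying over
associated primes of `M`. -/
theorem associatedPrimes_hom_finite
    [CommRing R] [IsNoetherianRing R] [CommRing S] [IsNoetherianRing S]
    [Algebra R S] [Module.Finite R S]
    [AddCommGroup M] [Module R M] [Module.Finite R M] :
    associatedPrimes S (S →ₗ[R] M) =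
      {Q : Ideal S | Q.IsPrime ∧ Q.comap (algebraMap R S) ∈ associatedPrimes R M} := by
  classical
  ext Q
  simp only [Set.mem_setOf_eq]
  rw [AssociatedPrimes.mem_iff, isAssociatedPrime_iff]
  constructor
  · rintro ⟨hQ, f, hf⟩
    refine ⟨hQ, ?_⟩
    have hsmul : ∀ (s t : S), (s • f) t = f (s * t) := fun s t => rfl
    set p := Q.comap (algebraMap R S) with hpdef
    haveI hpp : p.IsPrime := hQ.comap (algebraMap R S)
    set N := LinearMap.range f with hNdef
    have hmemp : ∀ r : R, r ∈ p ↔ ∀ s : S, r • f s = 0 := by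
      intro r
      rw [hpdef, Ideal.mem_comap, hf, Submodule.mem_colon_singleton, Submodule.mem_bot]
      have key : ∀ s : S, (algebraMap R S r • f) s = r • f s := by
        intro s
        rw [hsmul, ← Algebra.smul_def, map_smul]
      constructor
      · intro h s
        rw [← key, h, LinearMap.zero_apply]
      · intro h
        exact LinearMap.ext fun s => (key s).trans (h s)
    have hmemp' : ∀ r : R, r ∈ p ↔ ∀ m ∈ N, r • m = 0 := by
      intro r
      rw [hmemp]
      constructor
      · rintro h _ ⟨s, rfl⟩
        exact h s
      · intro h s
        exact h (f s) ⟨s, rfl⟩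
    have hNfg : N.FG := by
      rw [hNdef, LinearMap.range_eq_map]
      exact Submodule.FG.map f (Module.Finite.fg_top (R := R) (M := S))
    have hy : ∃ y ∈ N, ∀ r : R, r • y = 0 → r ∈ p := by
      by_contra hcon
      push_neg at hcon
      obtain ⟨t, ht⟩ := hNfg
      choose rr hrr1 hrr2 using fun (y : {y // y ∈ t}) =>
        hcon y (ht ▸ Submodule.subset_span (Finset.mem_coe.mpr y.2))
      set ρ := ∏ y ∈ t.attach, rr y with hρdef
      have hρp : ρ ∈ p := by
        rw [hmemp']
        intro m hm
        have hm2 : m ∈ N := hm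
        rw [← ht] at hm2
        have : ρ ∈ (Submodule.span R (t : Set M)).annihilator := by
          rw [Submodule.mem_annihilator_span]
          rintro ⟨n, hn⟩
          have hn' : n ∈ t := Finset.mem_coe.mp hn
          have hfac : rr ⟨n, hn'⟩ * ∏ x ∈ t.attach.erase ⟨n, hn'⟩, rr x = ρ :=
            Finset.mul_prod_erase t.attach rr (Finset.mem_attach t ⟨n, hn'⟩)
          rw [← hfac, mul_comm, mul_smul, hrr1 ⟨n, hn'⟩, smul_zero]
        exact Submodule.mem_annihilator.mp this m hm2
      obtain ⟨y, _, hyp⟩ := (Ideal.IsPrime.prod_mem_iff).mp hρp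
      exact hrr2 y hyp
    obtain ⟨y, hyN, hy⟩ := hy
    rw [AssociatedPrimes.mem_iff, isAssociatedPrime_iff]
    refine ⟨hpp, y, ?_⟩
    ext r
    rw [Submodule.mem_colon_singleton, Submodule.mem_bot]
    constructor
    · intro hr
      exact (hmemp' r).mp hr y hyN
    · exact hy r
  · rintro ⟨hQ, hp⟩
    rw [AssociatedPrimes.mem_iff, isAssociatedPrime_iff] at hp
    obtain ⟨hpprime, x, hx⟩ := hp
    haveI := hQ
    haveI := hpprime
    set p := Q.comap (algebraMap R S) with hpdef
    letI : Algebra (R ⧸ p) (S ⧸ Q) := (Ideal.quotientMap Q (algebraMap R S) le_rfl).toAlgebra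
    have halg : ∀ r : R, algebraMap R (S ⧸ Q) r = Ideal.Quotient.mk Q (algebraMap R S r) :=
      fun r => rfl
    haveI : IsScalarTower R (R ⧸ p) (S ⧸ Q) := IsScalarTower.of_algebraMap_eq' (by
      refine RingHom.ext fun r => ?_
      show algebraMap R (S ⧸ Q) r
        = Ideal.quotientMap Q (algebraMap R S) le_rfl (algebraMap R (R ⧸ p) r)
      rw [Ideal.Quotient.algebraMap_eq, Ideal.quotientMap_mk, halg])
    haveI : Module.Finite R (S ⧸ Q) :=
      Module.Finite.of_surjective (Ideal.Quotient.mkₐ R Q).toLinearMap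
        (Ideal.Quotient.mkₐ_surjective R Q)
    haveI : Module.Finite (R ⧸ p) (S ⧸ Q) :=
      Module.Finite.of_restrictScalars_finite R (R ⧸ p) (S ⧸ Q)
    have hinjA : Function.Injective (algebraMap (R ⧸ p) (S ⧸ Q)) :=
      Ideal.quotientMap_injective' (H := le_rfl) le_rfl
    have htf : ∀ (a : R ⧸ p) (c : S ⧸ Q), a • c = 0 → a = 0 ∨ c = 0 := by
      intro a c h
      rw [Algebra.smul_def] at h
      rcases mul_eq_zero.mp h with h' | h'
      · exact Or.inl (hinjA (by rw [h', map_zero]))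
      · exact Or.inr h'
    obtain ⟨n, v, hv⟩ := Module.Finite.exists_fin (R := R ⧸ p) (M := S ⧸ Q)
    obtain ⟨g, hg⟩ := lemA_aux (R ⧸ p) n (S ⧸ Q) htf v hv inferInstance
    -- the embedding R ⧸ p →ₗ[R] M onto R • x
    have hle : (p : Submodule R R) ≤ LinearMap.ker (LinearMap.toSpanSingleton R M x) := by
      intro r hr
      rw [LinearMap.mem_ker, LinearMap.toSpanSingleton_apply]
      rw [hx] at hr
      rwa [Submodule.mem_colon_singleton, Submodule.mem_bot] at hr
    set ι : (R ⧸ p) →ₗ[R] M := Submodule.liftQ p (LinearMap.toSpanSingleton R M x) hle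
      with hιdef
    have hιmk : ∀ r : R, ι (Ideal.Quotient.mk p r) = r • x := fun r => rfl
    have hιinj : Function.Injective ι := by
      rw [← LinearMap.ker_eq_bot]
      refine Submodule.ker_liftQ_eq_bot _ _ _ ?_
      intro r hr
      rw [LinearMap.mem_ker, LinearMap.toSpanSingleton_apply] at hr
      rw [hx]
      rwa [Submodule.mem_colon_singleton, Submodule.mem_bot]
    set gR : (S ⧸ Q) →ₗ[R] (R ⧸ p) := g.restrictScalars R with hgRdef
    set f : S →ₗ[R] M := ι ∘ₗ gR ∘ₗ (Ideal.Quotient.mkₐ R Q).toLinearMap with hfdef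
    have happ : ∀ t : S, f t = ι (gR (Ideal.Quotient.mk Q t)) := fun t => rfl
    refine ⟨hQ, f, ?_⟩
    ext s
    rw [Submodule.mem_colon_singleton, Submodule.mem_bot]
    have hsmulapp : ∀ t : S, (s • f) t = f (s * t) := fun t => rfl
    constructor
    · intro hs
      refine LinearMap.ext fun t => ?_
      rw [hsmulapp, happ, LinearMap.zero_apply]
      have h0 : Ideal.Quotient.mk Q (s * t) = 0 :=
        Ideal.Quotient.eq_zero_iff_mem.mpr (Q.mul_mem_right t hs)
      rw [h0, map_zero, map_zero]
    · intro hsf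
      by_contra hs
      set c : S ⧸ Q := Ideal.Quotient.mk Q s with hcdef
      have hc : c ≠ 0 := fun h => hs (Ideal.Quotient.eq_zero_iff_mem.mp h)
      haveI : Algebra.IsIntegral R (S ⧸ Q) := Algebra.IsIntegral.of_finite R (S ⧸ Q)
      obtain ⟨P, hPm, hPe⟩ := Algebra.IsIntegral.isIntegral (R := R) c
      have hPa : Polynomial.aeval c P = 0 := hPe
      obtain ⟨r, hr0, d, hd⟩ := lemB_aux P.natDegree P hPm le_rfl c hc hPa
      obtain ⟨c₀, hc₀'⟩ := DFunLike.ne_iff.mp hg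
      have hc₀ : g c₀ ≠ 0 := by simpa using hc₀'
      obtain ⟨u, hu⟩ := Ideal.Quotient.mk_surjective (I := Q) (d * c₀)
      have hru : r ∉ p := by
        intro hrp
        apply hr0
        rw [halg, Ideal.Quotient.eq_zero_iff_mem]
        exact hrp
      have hval : gR (Ideal.Quotient.mk Q (s * u)) = Ideal.Quotient.mk p r * g c₀ := by
        have h1 : Ideal.Quotient.mk Q (s * u) = algebraMap R (S ⧸ Q) r * c₀ := by
          rw [map_mul, ← hcdef, hu, ← mul_assoc, hd]
        have h2 : algebraMap R (S ⧸ Q) r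
            = algebraMap (R ⧸ p) (S ⧸ Q) (Ideal.Quotient.mk p r) := by
          rw [← Ideal.Quotient.algebraMap_eq, ← IsScalarTower.algebraMap_apply]
        rw [hgRdef, LinearMap.restrictScalars_apply, h1, h2, ← Algebra.smul_def, map_smul,
          smul_eq_mul]
      have hne : Ideal.Quotient.mk p r * g c₀ ≠ 0 :=
        mul_ne_zero (fun h => hru (Ideal.Quotient.eq_zero_iff_mem.mp h)) hc₀
      have : f (s * u) = 0 := by
        rw [← hsmulapp, hsf, LinearMap.zero_apply]
      rw [happ, hval] at this
      exact hne (hιinj (this.trans (map_zero ι).symm))
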